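/- Let M n be the number of partitions of {1,…,n} that are noncrossing and in which no block contains two consecutive integers. Then M 1 = M 2 = 1 and for n ≥ 3: M n = M (n-1) + Σ_{j=3}^{n} M (j-2) · M (n-j+1). (Hence M n is the (n-1)-st Motzkin number.) -/

import Mathlib

/-- A partition of the `n` points `{0,…,n-1}` given by its finite set of blocks. -/
def IsPartition (n : ℕ) (P : Finset (Finset (Fin n))) : Prop :=
  (∀ B ∈ P, B.Nonempty) ∧ ∀ i : Fin n, ∃! B, B ∈ P ∧ i ∈ B

/-- No block contains two consecutive integers. -/
def NoConsec (n : ℕ) (P : Finset (Finset (Fin n))) : Prop :=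
  ∀ B ∈ P, ∀ i ∈ B, ∀ j ∈ B, (i : ℕ) + 1 ≠ (j : ℕ)

/-- The partition is noncrossing: no `a < b < c < d` with `a,c` in one block
and `b,d` in a different block. -/
def NCPart (n : ℕ) (P : Finset (Finset (Fin n))) : Prop :=
  ∀ B ∈ P, ∀ C ∈ P, B ≠ C →
    ∀ a ∈ B, ∀ c ∈ B, ∀ b ∈ C, ∀ d ∈ C, ¬(a < b ∧ b < c ∧ c < d)

/-- The partition is self-complementary: applying `j ↦ n+1-j` (here `Fin.rev`)
inside each block yields the same partition. -/
def SelfCompl (n : ℕ) (P : Finset (Finset (Fin n))) : Prop :=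
  P.image (fun B => B.image Fin.rev) = P

/-- The number of noncrossing partitions of `{1,…,n}` in which no block contains
two consecutive integers. -/
noncomputable def M (n : ℕ) : ℕ :=
  Nat.card {P : Finset (Finset (Fin n)) // IsPartition n P ∧ NCPart n P ∧ NoConsec n P}

namespace S11
variable {m n : ℕ}

def Good (n : ℕ) (P : Finset (Finset (Fin n))) : Prop :=
  IsPartition n P ∧ NCPart n P ∧ NoConsec n P

def emap (c : ℕ) (h : c + m ≤ n) (i : Fin m) : Fin n :=
  ⟨c + i, by have := i.isLt; omega⟩

@[simp] lemma emap_val (c : ℕ) (h : c + m ≤ n) (i : Fin m) : (emap c h i : ℕ) = c + i := rfl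

def embB (c : ℕ) (h : c + m ≤ n) (B : Finset (Fin m)) : Finset (Fin n) := B.image (emap c h)

def pullB (c : ℕ) (h : c + m ≤ n) (B : Finset (Fin n)) : Finset (Fin m) :=
  Finset.univ.filter (fun i => emap c h i ∈ B)

lemma mem_embB {c : ℕ} {h : c + m ≤ n} {B : Finset (Fin m)} {x : Fin n} :
    x ∈ embB c h B ↔ ∃ i ∈ B, (x : ℕ) = c + i := by
  simp [embB, Fin.ext_iff, emap, eq_comm]

lemma mem_pullB {c : ℕ} {h : c + m ≤ n} {B : Finset (Fin n)} {i : Fin m} :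
    i ∈ pullB c h B ↔ emap c h i ∈ B := by simp [pullB]

lemma embB_bounds {c : ℕ} {h : c + m ≤ n} {B : Finset (Fin m)} {x : Fin n}
    (hx : x ∈ embB c h B) : c ≤ (x : ℕ) ∧ (x : ℕ) < c + m := by
  obtain ⟨i, _, hi⟩ := mem_embB.1 hx
  have := i.isLt; omega

lemma pullB_embB {c : ℕ} {h : c + m ≤ n} (B : Finset (Fin m)) :
    pullB c h (embB c h B) = B := by
  ext i
  simp only [mem_pullB, mem_embB, emap_val]
  constructor
  · rintro ⟨j, hj, hij⟩
    have : i = j := Fin.ext (by omega)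
    rwa [this]
  · exact fun hi => ⟨i, hi, rfl⟩

lemma embB_pullB {c : ℕ} {h : c + m ≤ n} (B : Finset (Fin n))
    (hB : ∀ x ∈ B, c ≤ (x : ℕ) ∧ (x : ℕ) < c + m) :
    embB c h (pullB c h B) = B := by
  ext x
  simp only [mem_embB, mem_pullB]
  constructor
  · rintro ⟨i, hi, hx⟩
    have : x = emap c h i := Fin.ext (by simp [hx])
    rwa [this]
  · intro hx
    obtain ⟨h1, h2⟩ := hB x hx
    refine ⟨⟨(x : ℕ) - c, by omega⟩, ?_, by simp; omega⟩
    have : emap c h ⟨(x : ℕ) - c, by omega⟩ = x := Fin.ext (by simp [emap]; omega)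
    rwa [this]

lemma embB_nonempty {c : ℕ} {h : c + m ≤ n} {B : Finset (Fin m)} (hB : B.Nonempty) :
    (embB c h B).Nonempty := hB.image _

/-- Transfer of all three conditions along a pullback of a window family. -/
lemma pull_good (c : ℕ) (h : c + m ≤ n) (R : Finset (Finset (Fin n)))
    (hwin : ∀ B ∈ R, ∀ x ∈ B, c ≤ (x : ℕ) ∧ (x : ℕ) < c + m)
    (hne : ∀ B ∈ R, B.Nonempty)
    (hcov : ∀ i : Fin m, ∃! B, B ∈ R ∧ emap c h i ∈ B)
    (hnc : ∀ B ∈ R, ∀ C ∈ R, B ≠ C →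
      ∀ a ∈ B, ∀ c' ∈ B, ∀ b ∈ C, ∀ d ∈ C, ¬(a < b ∧ b < c' ∧ c' < d))
    (hcons : ∀ B ∈ R, ∀ i ∈ B, ∀ j ∈ B, (i : ℕ) + 1 ≠ (j : ℕ)) :
    Good m (R.image (pullB c h)) := by
  refine ⟨⟨?_, ?_⟩, ?_, ?_⟩
  · rintro B' hB'
    obtain ⟨B, hB, rfl⟩ := Finset.mem_image.1 hB'
    obtain ⟨x, hx⟩ := hne B hB
    obtain ⟨h1, h2⟩ := hwin B hB x hx
    refine ⟨⟨(x : ℕ) - c, by omega⟩, ?_⟩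
    rw [mem_pullB]
    have : emap c h ⟨(x : ℕ) - c, by omega⟩ = x := Fin.ext (by simp [emap]; omega)
    rwa [this]
  · intro i
    obtain ⟨B, ⟨hBR, hBi⟩, hBu⟩ := hcov i
    refine ⟨pullB c h B, ⟨Finset.mem_image_of_mem _ hBR, mem_pullB.2 hBi⟩, ?_⟩
    rintro B' ⟨hB', hiB'⟩
    obtain ⟨C, hC, rfl⟩ := Finset.mem_image.1 hB'
    rw [hBu C ⟨hC, mem_pullB.1 hiB'⟩]
  · rintro B' hB' C' hC' hBC a ha c' hc' b hb d hd ⟨h1, h2, h3⟩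
    obtain ⟨B, hB, rfl⟩ := Finset.mem_image.1 hB'
    obtain ⟨C, hC, rfl⟩ := Finset.mem_image.1 hC'
    have hBCne : B ≠ C := by rintro rfl; exact hBC rfl
    rw [Fin.lt_def] at h1 h2 h3
    exact hnc B hB C hC hBCne _ (mem_pullB.1 ha) _ (mem_pullB.1 hc') _ (mem_pullB.1 hb)
      _ (mem_pullB.1 hd)
      ⟨by rw [Fin.lt_def]; simp only [emap_val]; omega,
       by rw [Fin.lt_def]; simp only [emap_val]; omega,
       by rw [Fin.lt_def]; simp only [emap_val]; omega⟩
  · rintro B' hB' i hi j hj hij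
    obtain ⟨B, hB, rfl⟩ := Finset.mem_image.1 hB'
    exact hcons B hB _ (mem_pullB.1 hi) _ (mem_pullB.1 hj) (by simp only [emap_val]; omega)


def zf (h : 0 < n) : Fin n := ⟨0, h⟩

@[simp] lemma zf_val (h : 0 < n) : (zf h : ℕ) = 0 := rfl

lemma zf_not_mem_embB {c : ℕ} (hc : 1 ≤ c) {h : c + m ≤ n} {B : Finset (Fin m)}
    (h0 : 0 < n) : zf h0 ∉ embB c h B := by
  intro hx
  have := embB_bounds hx
  simp at this; omega

/-- Case A construction: prepend a singleton `{0}`. -/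
def PA (hn : 1 ≤ n) (Q : Finset (Finset (Fin (n - 1)))) : Finset (Finset (Fin n)) :=
  insert {zf (by omega)} (Q.image (embB 1 (by omega)))

lemma mem_PA {hn : 1 ≤ n} {Q : Finset (Finset (Fin (n - 1)))} {B : Finset (Fin n)} :
    B ∈ PA hn Q ↔ B = {zf (by omega)} ∨ ∃ C ∈ Q, B = embB 1 (by omega) C := by
  simp [PA, eq_comm]

lemma PA_good (hn : 1 ≤ n) {Q : Finset (Finset (Fin (n - 1)))} (hQ : Good (n - 1) Q) :
    Good n (PA hn Q) := by
  obtain ⟨⟨hne, hcov⟩, hnc, hcons⟩ := hQ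
  have h1 : 1 + (n - 1) ≤ n := by omega
  have h0 : 0 < n := by omega
  refine ⟨⟨?_, ?_⟩, ?_, ?_⟩
  · intro B hB
    rcases mem_PA.1 hB with rfl | ⟨C, hC, rfl⟩
    · exact ⟨_, Finset.mem_singleton_self _⟩
    · exact embB_nonempty (hne C hC)
  · intro x
    by_cases hx0 : (x : ℕ) = 0
    · have hxz : x = zf h0 := Fin.ext hx0
      subst hxz
      refine ⟨{zf h0}, ⟨mem_PA.2 (Or.inl rfl), Finset.mem_singleton_self _⟩, ?_⟩
      rintro B' ⟨hB', hzB'⟩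
      rcases mem_PA.1 hB' with rfl | ⟨C, hC, rfl⟩
      · rfl
      · exact absurd hzB' (zf_not_mem_embB le_rfl h0)
    · have hx1 : 1 ≤ (x : ℕ) := by omega
      have hxlt : (x : ℕ) - 1 < n - 1 := by have := x.isLt; omega
      set i : Fin (n - 1) := ⟨(x : ℕ) - 1, hxlt⟩ with hi
      obtain ⟨C, ⟨hC, hiC⟩, hCu⟩ := hcov i
      have hxC : x ∈ embB 1 h1 C := mem_embB.2 ⟨i, hiC, by simp [hi]; omega⟩
      refine ⟨embB 1 h1 C, ⟨mem_PA.2 (Or.inr ⟨C, hC, rfl⟩), hxC⟩, ?_⟩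
      rintro B' ⟨hB', hxB'⟩
      rcases mem_PA.1 hB' with rfl | ⟨C', hC', rfl⟩
      · simp at hxB'; rw [hxB'] at hx0; simp at hx0
      · obtain ⟨i', hi'C', hxi'⟩ := mem_embB.1 hxB'
        have : i' = i := Fin.ext (by simp [hi]; omega)
        subst this
        rw [hCu C' ⟨hC', hi'C'⟩]
  · rintro B hB C hC hBC a ha c hc b hb d hd ⟨l1, l2, l3⟩
    rw [Fin.lt_def] at l1 l2 l3
    rcases mem_PA.1 hB with rfl | ⟨C1, hC1, rfl⟩
    · simp at ha hc
      rw [ha] at l1; rw [hc] at l2; simp only [zf_val] at l1 l2; omega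
    · rcases mem_PA.1 hC with rfl | ⟨C2, hC2, rfl⟩
      · simp at hb hd
        rw [hb] at l1; simp only [zf_val] at l1; omega
      · have hne12 : C1 ≠ C2 := by rintro rfl; exact hBC rfl
        obtain ⟨a', ha'C, ha'⟩ := mem_embB.1 ha
        obtain ⟨c', hc'C, hc'⟩ := mem_embB.1 hc
        obtain ⟨b', hb'C, hb'⟩ := mem_embB.1 hb
        obtain ⟨d', hd'C, hd'⟩ := mem_embB.1 hd
        exact hnc C1 hC1 C2 hC2 hne12 a' ha'C c' hc'C b' hb'C d' hd'C
          ⟨by rw [Fin.lt_def]; omega, by rw [Fin.lt_def]; omega, by rw [Fin.lt_def]; omega⟩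
  · rintro B hB x hx y hy hxy
    rcases mem_PA.1 hB with rfl | ⟨C, hC, rfl⟩
    · simp at hx hy
      rw [hx, hy] at hxy; simp at hxy
    · obtain ⟨x', hx'C, hx'⟩ := mem_embB.1 hx
      obtain ⟨y', hy'C, hy'⟩ := mem_embB.1 hy
      exact hcons C hC x' hx'C y' hy'C (by omega)

section PBsec
variable {n p : ℕ}

/-- Case B construction: a block of `Fin (n-p)` is embedded at offset `p`;
the block containing `0` (i.e. the point `p`) additionally receives the point `0`. -/
def push (hpn : 2 ≤ p ∧ p + 1 ≤ n) (C : Finset (Fin (n - p))) : Finset (Fin n) :=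
  if (⟨0, by omega⟩ : Fin (n - p)) ∈ C then insert (zf (by omega)) (embB p (by omega) C)
  else embB p (by omega) C

lemma embB_subset_push {hpn : 2 ≤ p ∧ p + 1 ≤ n} {C : Finset (Fin (n - p))} :
    embB p (by omega) C ⊆ push hpn C := by
  unfold push; split
  · exact Finset.subset_insert _ _
  · exact Finset.Subset.refl _

lemma zf_mem_push {hpn : 2 ≤ p ∧ p + 1 ≤ n} {C : Finset (Fin (n - p))} :
    zf (by omega) ∈ push hpn C ↔ (⟨0, by omega⟩ : Fin (n - p)) ∈ C := by
  unfold push; split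
  · simp_all
  · constructor
    · intro hx; exact absurd hx (zf_not_mem_embB (by omega) (by omega))
    · intro hx; simp_all

lemma mem_push_of_ne {hpn : 2 ≤ p ∧ p + 1 ≤ n} {C : Finset (Fin (n - p))} {x : Fin n}
    (hx : (x : ℕ) ≠ 0) : x ∈ push hpn C ↔ x ∈ embB p (by omega) C := by
  unfold push; split
  · simp only [Finset.mem_insert]
    constructor
    · rintro (rfl | h)
      · simp at hx
      · exact h
    · exact Or.inr
  · rfl

lemma push_range {hpn : 2 ≤ p ∧ p + 1 ≤ n} {C : Finset (Fin (n - p))} {x : Fin n}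
    (hx : x ∈ push hpn C) : (x : ℕ) = 0 ∨ p ≤ (x : ℕ) := by
  by_cases h0 : (x : ℕ) = 0
  · exact Or.inl h0
  · rw [mem_push_of_ne h0] at hx
    have := embB_bounds hx; omega

lemma push_erase_zf {hpn : 2 ≤ p ∧ p + 1 ≤ n} {C : Finset (Fin (n - p))} :
    (push hpn C).erase (zf (by omega)) = embB p (by omega) C := by
  ext x
  simp only [Finset.mem_erase]
  constructor
  · rintro ⟨hx0, hx⟩
    rwa [mem_push_of_ne (by simpa [Fin.ext_iff] using hx0)] at hx
  · intro hx
    have hb := embB_bounds hx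
    exact ⟨by simp [Fin.ext_iff]; omega, embB_subset_push hx⟩

def PB (hpn : 2 ≤ p ∧ p + 1 ≤ n) (Qi : Finset (Finset (Fin (p - 1))))
    (Qo : Finset (Finset (Fin (n - p)))) : Finset (Finset (Fin n)) :=
  Qi.image (embB 1 (by omega)) ∪ Qo.image (push hpn)

lemma mem_PB {hpn : 2 ≤ p ∧ p + 1 ≤ n} {Qi : Finset (Finset (Fin (p - 1)))}
    {Qo : Finset (Finset (Fin (n - p)))} {B : Finset (Fin n)} :
    B ∈ PB hpn Qi Qo ↔ (∃ C ∈ Qi, B = embB 1 (by omega) C) ∨ ∃ C ∈ Qo, B = push hpn C := by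
  simp [PB, eq_comm]

lemma inner_range {h : 1 + (p - 1) ≤ n} {C : Finset (Fin (p - 1))} {x : Fin n}
    (hx : x ∈ embB 1 h C) : 1 ≤ (x : ℕ) ∧ (x : ℕ) < p := by
  have := embB_bounds hx; omega

lemma PB_good {hpn : 2 ≤ p ∧ p + 1 ≤ n} {Qi : Finset (Finset (Fin (p - 1)))}
    {Qo : Finset (Finset (Fin (n - p)))} (hQi : Good (p - 1) Qi) (hQo : Good (n - p) Qo) :
    Good n (PB hpn Qi Qo) := by
  obtain ⟨⟨hine, hicov⟩, hinc, hicons⟩ := hQi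
  obtain ⟨⟨hone, hocov⟩, honc, hocons⟩ := hQo
  have h1 : 1 + (p - 1) ≤ n := by omega
  have hpo : p + (n - p) ≤ n := by omega
  have h0 : 0 < n := by omega
  refine ⟨⟨?_, ?_⟩, ?_, ?_⟩
  · intro B hB
    rcases mem_PB.1 hB with ⟨C, hC, rfl⟩ | ⟨C, hC, rfl⟩
    · exact embB_nonempty (hine C hC)
    · obtain ⟨x, hx⟩ := hone C hC
      exact ⟨emap p hpo x, embB_subset_push (Finset.mem_image_of_mem _ hx)⟩
  · intro x
    by_cases hx0 : (x : ℕ) = 0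
    · have hxz : x = zf h0 := Fin.ext hx0
      subst hxz
      obtain ⟨C0, ⟨hC0, h00⟩, hC0u⟩ := hocov ⟨0, by omega⟩
      refine ⟨push hpn C0, ⟨mem_PB.2 (Or.inr ⟨C0, hC0, rfl⟩), zf_mem_push.2 h00⟩, ?_⟩
      rintro B' ⟨hB', hzB'⟩
      rcases mem_PB.1 hB' with ⟨C, hC, rfl⟩ | ⟨C, hC, rfl⟩
      · have := inner_range hzB'; simp at this
      · rw [hC0u C ⟨hC, zf_mem_push.1 hzB'⟩]
    · by_cases hxp : (x : ℕ) < p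
      · have hxlt : (x : ℕ) - 1 < p - 1 := by omega
        set i : Fin (p - 1) := ⟨(x : ℕ) - 1, hxlt⟩ with hi
        obtain ⟨C, ⟨hC, hiC⟩, hCu⟩ := hicov i
        refine ⟨embB 1 h1 C, ⟨mem_PB.2 (Or.inl ⟨C, hC, rfl⟩),
          mem_embB.2 ⟨i, hiC, by simp [hi]; omega⟩⟩, ?_⟩
        rintro B' ⟨hB', hxB'⟩
        rcases mem_PB.1 hB' with ⟨C', hC', rfl⟩ | ⟨C', hC', rfl⟩
        · obtain ⟨i', hi'C', hxi'⟩ := mem_embB.1 hxB'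
          have : i' = i := Fin.ext (by simp [hi]; omega)
          subst this
          rw [hCu C' ⟨hC', hi'C'⟩]
        · rcases push_range hxB' with h | h <;> omega
      · have hxlt : (x : ℕ) - p < n - p := by have := x.isLt; omega
        set i : Fin (n - p) := ⟨(x : ℕ) - p, hxlt⟩ with hi
        obtain ⟨C, ⟨hC, hiC⟩, hCu⟩ := hocov i
        have hxC : x ∈ embB p hpo C := mem_embB.2 ⟨i, hiC, by simp [hi]; omega⟩
        refine ⟨push hpn C, ⟨mem_PB.2 (Or.inr ⟨C, hC, rfl⟩), embB_subset_push hxC⟩, ?_⟩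
        rintro B' ⟨hB', hxB'⟩
        rcases mem_PB.1 hB' with ⟨C', hC', rfl⟩ | ⟨C', hC', rfl⟩
        · have := inner_range hxB'; omega
        · rw [mem_push_of_ne hx0] at hxB'
          obtain ⟨i', hi'C', hxi'⟩ := mem_embB.1 hxB'
          have : i' = i := Fin.ext (by simp [hi]; omega)
          subst this
          rw [hCu C' ⟨hC', hi'C'⟩]
  · rintro B hB C hC hBC a ha c hc b hb d hd ⟨l1, l2, l3⟩
    rw [Fin.lt_def] at l1 l2 l3
    rcases mem_PB.1 hB with ⟨C1, hC1, rfl⟩ | ⟨C1, hC1, rfl⟩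
    · rcases mem_PB.1 hC with ⟨C2, hC2, rfl⟩ | ⟨C2, hC2, rfl⟩
      · -- inner/inner
        have hne12 : C1 ≠ C2 := by rintro rfl; exact hBC rfl
        obtain ⟨a', ha'C, ha'⟩ := mem_embB.1 ha
        obtain ⟨c', hc'C, hc'⟩ := mem_embB.1 hc
        obtain ⟨b', hb'C, hb'⟩ := mem_embB.1 hb
        obtain ⟨d', hd'C, hd'⟩ := mem_embB.1 hd
        exact hinc C1 hC1 C2 hC2 hne12 a' ha'C c' hc'C b' hb'C d' hd'C
          ⟨by rw [Fin.lt_def]; omega, by rw [Fin.lt_def]; omega, by rw [Fin.lt_def]; omega⟩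
      · -- inner/push
        have har := inner_range ha
        have hcr := inner_range hc
        rcases push_range hb with h | h <;> omega
    · rcases mem_PB.1 hC with ⟨C2, hC2, rfl⟩ | ⟨C2, hC2, rfl⟩
      · -- push/inner
        have hbr := inner_range hb
        have hdr := inner_range hd
        rcases push_range hc with h | h <;> omega
      · -- push/push
        have hne12 : C1 ≠ C2 := by rintro rfl; exact hBC rfl
        have hbp : p ≤ (b : ℕ) := by rcases push_range hb with h | h <;> omega
        have hcp : p ≤ (c : ℕ) := by rcases push_range hc with h | h <;> omega
        have hdp : p ≤ (d : ℕ) := by rcases push_range hd with h | h <;> omega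
        rw [mem_push_of_ne (by omega)] at hb hc hd
        obtain ⟨b', hb'C, hb'⟩ := mem_embB.1 hb
        obtain ⟨c', hc'C, hc'⟩ := mem_embB.1 hc
        obtain ⟨d', hd'C, hd'⟩ := mem_embB.1 hd
        by_cases ha0 : (a : ℕ) = 0
        · -- a is the added zero: use 0 ∈ C1 instead
          have h0C1 : (⟨0, by omega⟩ : Fin (n - p)) ∈ C1 :=
            zf_mem_push.1 (by rwa [show a = zf h0 from Fin.ext ha0] at ha)
          have hb'0 : (b' : ℕ) ≠ 0 := by
            intro hb'0
            have : (⟨0, by omega⟩ : Fin (n - p)) ∈ C2 := by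
              have : b' = ⟨0, by omega⟩ := Fin.ext hb'0
              rwa [this] at hb'C
            obtain ⟨D, _, hDu⟩ := hocov ⟨0, by omega⟩
            exact hne12 ((hDu C1 ⟨hC1, h0C1⟩).trans (hDu C2 ⟨hC2, this⟩).symm)
          exact honc C1 hC1 C2 hC2 hne12 ⟨0, by omega⟩ h0C1 c' hc'C b' hb'C d' hd'C
            ⟨by rw [Fin.lt_def]; simp; omega, by rw [Fin.lt_def]; omega,
             by rw [Fin.lt_def]; omega⟩
        · have hap : p ≤ (a : ℕ) := by rcases push_range ha with h | h <;> omega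
          rw [mem_push_of_ne (by omega)] at ha
          obtain ⟨a', ha'C, ha'⟩ := mem_embB.1 ha
          exact honc C1 hC1 C2 hC2 hne12 a' ha'C c' hc'C b' hb'C d' hd'C
            ⟨by rw [Fin.lt_def]; omega, by rw [Fin.lt_def]; omega, by rw [Fin.lt_def]; omega⟩
  · rintro B hB x hx y hy hxy
    rcases mem_PB.1 hB with ⟨C, hC, rfl⟩ | ⟨C, hC, rfl⟩
    · obtain ⟨x', hx'C, hx'⟩ := mem_embB.1 hx
      obtain ⟨y', hy'C, hy'⟩ := mem_embB.1 hy
      exact hicons C hC x' hx'C y' hy'C (by omega)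
    · by_cases hx0 : (x : ℕ) = 0
      · rcases push_range hy with h | h <;> omega
      · have hy0 : (y : ℕ) ≠ 0 := by omega
        rw [mem_push_of_ne hx0] at hx
        rw [mem_push_of_ne hy0] at hy
        obtain ⟨x', hx'C, hx'⟩ := mem_embB.1 hx
        obtain ⟨y', hy'C, hy'⟩ := mem_embB.1 hy
        exact hocons C hC x' hx'C y' hy'C (by omega)

end PBsec
section Recover
variable {n p : ℕ}

lemma zf_singleton_not_mem_PB {hpn : 2 ≤ p ∧ p + 1 ≤ n} {Qi : Finset (Finset (Fin (p - 1)))}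
    {Qo : Finset (Finset (Fin (n - p)))} :
    ({zf (by omega)} : Finset (Fin n)) ∉ PB hpn Qi Qo := by
  intro hmem
  rcases mem_PB.1 hmem with ⟨C, hC, hCeq⟩ | ⟨C, hC, hCeq⟩
  · have hz := Finset.mem_singleton_self (zf (by omega : (0:ℕ) < n))
    rw [hCeq] at hz
    exact zf_not_mem_embB le_rfl (by omega) hz
  · have hz := Finset.mem_singleton_self (zf (by omega : (0:ℕ) < n))
    rw [hCeq] at hz
    have h00 := zf_mem_push.1 hz
    have hp : emap p (by omega : p + (n - p) ≤ n) ⟨0, by omega⟩ ∈ push hpn C :=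
      embB_subset_push (Finset.mem_image_of_mem _ h00)
    rw [← hCeq] at hp
    simp [Fin.ext_iff, emap] at hp
    omega

lemma PA_recover {hn : 1 ≤ n} {Q : Finset (Finset (Fin (n - 1)))}
    (hne : ∀ B ∈ Q, B.Nonempty) :
    ((PA hn Q).erase {zf (by omega)}).image (pullB 1 (by omega)) = Q := by
  have hnotmem : ({zf (by omega : (0:ℕ) < n)} : Finset (Fin n)) ∉
      Q.image (embB 1 (by omega : 1 + (n - 1) ≤ n)) := by
    intro hmem
    obtain ⟨C, hC, hCeq⟩ := Finset.mem_image.1 hmem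
    obtain ⟨x, hx⟩ := hne C hC
    have hmem2 : emap 1 (by omega : 1 + (n - 1) ≤ n) x ∈ embB 1 (by omega) C :=
      Finset.mem_image_of_mem _ hx
    rw [hCeq] at hmem2
    simp [Fin.ext_iff] at hmem2
  rw [PA, Finset.erase_insert hnotmem, Finset.image_image]
  rw [show (pullB 1 (by omega : 1 + (n-1) ≤ n)) ∘ (embB 1 (by omega)) = id from
    funext fun B => pullB_embB B]
  exact Finset.image_id

lemma PB_erase_zf_nonempty {hpn : 2 ≤ p ∧ p + 1 ≤ n} {Qi} {Qo}
    {B : Finset (Fin n)} (hB : B ∈ PB hpn Qi Qo) (hz : zf (by omega) ∈ B) :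
    (B.erase (zf (by omega))).Nonempty := by
  rcases mem_PB.1 hB with ⟨C, hC, rfl⟩ | ⟨C, hC, rfl⟩
  · exact absurd hz (zf_not_mem_embB le_rfl (by omega))
  · have h00 := zf_mem_push.1 hz
    rw [push_erase_zf]
    exact ⟨_, Finset.mem_image_of_mem _ h00⟩

lemma PB_min_char {hpn : 2 ≤ p ∧ p + 1 ≤ n} {Qi} {Qo}
    {B : Finset (Fin n)} (hB : B ∈ PB hpn Qi Qo) (hz : zf (by omega) ∈ B)
    (hne : (B.erase (zf (by omega))).Nonempty) :
    (((B.erase (zf (by omega))).min' hne : Fin n) : ℕ) = p := by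
  rcases mem_PB.1 hB with ⟨C, hC, rfl⟩ | ⟨C, hC, rfl⟩
  · exact absurd hz (zf_not_mem_embB le_rfl (by omega))
  · have h00 := zf_mem_push.1 hz
    have hpm : (⟨p, by omega⟩ : Fin n) ∈ (push hpn C).erase (zf (by omega)) := by
      rw [push_erase_zf]
      exact Finset.mem_image_of_mem _ h00
    have h1 := Finset.min'_le _ _ hpm
    have h2 : ∀ y ∈ (push hpn C).erase (zf (by omega)), (⟨p, by omega⟩ : Fin n) ≤ y := by
      intro y hy
      rw [push_erase_zf] at hy
      have := embB_bounds hy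
      rw [Fin.le_def]
      simp; omega
    have h3 := Finset.le_min' _ hne _ h2
    have h4 : (⟨p, by omega⟩ : Fin n) = ((push hpn C).erase (zf (by omega))).min' hne :=
      le_antisymm h3 h1
    rw [← h4]

lemma PB_recover_inner {hpn : 2 ≤ p ∧ p + 1 ≤ n} {Qi : Finset (Finset (Fin (p - 1)))}
    {Qo : Finset (Finset (Fin (n - p)))} (hone : ∀ B ∈ Qo, B.Nonempty) :
    ((PB hpn Qi Qo).filter
        (fun B => ∀ x : Fin n, x ∈ B → 1 ≤ (x : ℕ) ∧ (x : ℕ) < p)).image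
      (pullB 1 (by omega)) = Qi := by
  have hfil : (PB hpn Qi Qo).filter
        (fun B => ∀ x : Fin n, x ∈ B → 1 ≤ (x : ℕ) ∧ (x : ℕ) < p)
      = Qi.image (embB 1 (by omega)) := by
    ext B
    simp only [Finset.mem_filter]
    constructor
    · rintro ⟨hB, hpred⟩
      rcases mem_PB.1 hB with ⟨C, hC, rfl⟩ | ⟨C, hC, rfl⟩
      · exact Finset.mem_image_of_mem _ hC
      · exfalso
        obtain ⟨x, hx⟩ := hone C hC
        have hxp : emap p (by omega : p + (n - p) ≤ n) x ∈ push hpn C :=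
          embB_subset_push (Finset.mem_image_of_mem _ hx)
        have := hpred _ hxp
        simp only [emap_val] at this
        omega
    · intro hB
      obtain ⟨C, hC, rfl⟩ := Finset.mem_image.1 hB
      refine ⟨mem_PB.2 (Or.inl ⟨C, hC, rfl⟩), fun x hx => inner_range (p := p) hx⟩
  rw [hfil, Finset.image_image]
  rw [show (pullB 1 (by omega : 1 + (p-1) ≤ n)) ∘ (embB 1 (by omega)) = id from
    funext fun B => pullB_embB B]
  exact Finset.image_id

lemma PB_recover_outer {hpn : 2 ≤ p ∧ p + 1 ≤ n} {Qi : Finset (Finset (Fin (p - 1)))}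
    {Qo : Finset (Finset (Fin (n - p)))} (hone : ∀ B ∈ Qo, B.Nonempty) :
    (((PB hpn Qi Qo).filter (fun B => ∃ x : Fin n, x ∈ B ∧ p ≤ (x : ℕ))).image
      (fun B => B.erase (zf (by omega)))).image (pullB p (by omega)) = Qo := by
  have hfil : (PB hpn Qi Qo).filter (fun B => ∃ x : Fin n, x ∈ B ∧ p ≤ (x : ℕ))
      = Qo.image (push hpn) := by
    ext B
    simp only [Finset.mem_filter]
    constructor
    · rintro ⟨hB, hpred⟩
      rcases mem_PB.1 hB with ⟨C, hC, rfl⟩ | ⟨C, hC, rfl⟩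
      · exfalso
        obtain ⟨x, hx, hxp⟩ := hpred
        have := inner_range (p := p) hx
        omega
      · exact Finset.mem_image_of_mem _ hC
    · intro hB
      obtain ⟨C, hC, rfl⟩ := Finset.mem_image.1 hB
      refine ⟨mem_PB.2 (Or.inr ⟨C, hC, rfl⟩), ?_⟩
      obtain ⟨x, hx⟩ := hone C hC
      exact ⟨emap p (by omega) x, embB_subset_push (Finset.mem_image_of_mem _ hx), by simp⟩
  rw [hfil, Finset.image_image, Finset.image_image]
  have hcomp : ((pullB p (by omega : p + (n - p) ≤ n)) ∘ (fun B => B.erase (zf (by omega))))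
      ∘ (push hpn) = id := by
    funext C
    simp only [Function.comp_apply, id_eq]
    rw [push_erase_zf, pullB_embB]
  rw [hcomp]
  exact Finset.image_id

end Recover
section Decomp
variable {n : ℕ}

lemma case_singleton (hn : 3 ≤ n) {P : Finset (Finset (Fin n))} (hP : Good n P)
    (h0 : ({zf (by omega)} : Finset (Fin n)) ∈ P) :
    Good (n - 1) ((P.erase {zf (by omega)}).image (pullB 1 (by omega))) ∧
      PA (by omega) ((P.erase {zf (by omega)}).image (pullB 1 (by omega))) = P := by
  obtain ⟨⟨hne, hcov⟩, hnc, hcons⟩ := hP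
  have h1 : 1 + (n - 1) ≤ n := by omega
  have hz0 : (0:ℕ) < n := by omega
  have hwin : ∀ B ∈ P.erase {zf hz0}, ∀ x : Fin n, x ∈ B →
      1 ≤ (x : ℕ) ∧ (x : ℕ) < 1 + (n - 1) := by
    intro B hB x hx
    obtain ⟨hBne, hBP⟩ := Finset.mem_erase.1 hB
    have hx0 : (x : ℕ) ≠ 0 := by
      intro h
      have hxz : x = zf hz0 := Fin.ext h
      subst hxz
      obtain ⟨D, _, hDu⟩ := hcov (zf hz0)
      exact hBne ((hDu B ⟨hBP, hx⟩).trans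
        (hDu {zf hz0} ⟨h0, Finset.mem_singleton_self _⟩).symm)
    have := x.isLt; omega
  constructor
  · refine pull_good 1 h1 _ hwin (fun B hB => hne B (Finset.mem_of_mem_erase hB)) ?_ ?_ ?_
    · intro i
      obtain ⟨B, ⟨hBP, hBx⟩, hBu⟩ := hcov (emap 1 h1 i)
      have hBne : B ≠ {zf hz0} := by
        intro h
        rw [h] at hBx
        simp [Fin.ext_iff] at hBx
      exact ⟨B, ⟨Finset.mem_erase.2 ⟨hBne, hBP⟩, hBx⟩,
        fun C ⟨hC, hCx⟩ => hBu C ⟨Finset.mem_of_mem_erase hC, hCx⟩⟩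
    · intro B hB C hC hBC a ha c hc b hb d hd
      exact hnc B (Finset.mem_of_mem_erase hB) C (Finset.mem_of_mem_erase hC) hBC
        a ha c hc b hb d hd
    · intro B hB x hx y hy
      exact hcons B (Finset.mem_of_mem_erase hB) x hx y hy
  · rw [PA, Finset.image_image]
    have himg : (P.erase {zf hz0}).image (embB 1 h1 ∘ pullB 1 h1) = P.erase {zf hz0} := by
      rw [Finset.image_congr (f := embB 1 h1 ∘ pullB 1 h1) (g := id)
        (fun B hB => embB_pullB B (hwin B hB)), Finset.image_id]
    rw [himg]
    exact Finset.insert_erase h0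

lemma case_nonsingleton (hn : 3 ≤ n) {P : Finset (Finset (Fin n))} (hP : Good n P)
    {B0 : Finset (Fin n)} (hB0P : B0 ∈ P) (hz : zf (by omega) ∈ B0)
    (hB0 : B0 ≠ {zf (by omega)}) :
    ∃ (p : ℕ) (hpn : 2 ≤ p ∧ p + 1 ≤ n)
      (Qi : Finset (Finset (Fin (p - 1)))) (Qo : Finset (Finset (Fin (n - p)))),
      Good (p - 1) Qi ∧ Good (n - p) Qo ∧ PB hpn Qi Qo = P := by
  obtain ⟨⟨hne, hcov⟩, hnc, hcons⟩ := hP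
  have h0 : (0:ℕ) < n := by omega
  have hne0 : (B0.erase (zf h0)).Nonempty := by
    rcases Finset.eq_empty_or_nonempty (B0.erase (zf h0)) with he | h
    · exfalso
      apply hB0
      apply Finset.eq_singleton_iff_unique_mem.2 ⟨hz, ?_⟩
      intro x hx
      by_contra hxz
      have hmem : x ∈ B0.erase (zf h0) := Finset.mem_erase.2 ⟨hxz, hx⟩
      rw [he] at hmem
      simp at hmem
    · exact h
  set pF := (B0.erase (zf h0)).min' hne0 with hpFdef
  set p := (pF : ℕ) with hpdef
  have hpFmem := Finset.min'_mem _ hne0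
  have hpFB0 : pF ∈ B0 := Finset.mem_of_mem_erase hpFmem
  have hpF0 : (pF : ℕ) ≠ 0 := by
    have := (Finset.mem_erase.1 hpFmem).1
    simpa [Fin.ext_iff] using this
  have hmin : ∀ x ∈ B0, x ≠ zf h0 → p ≤ (x : ℕ) := fun x hx hxz =>
    Fin.le_def.1 (Finset.min'_le _ _ (Finset.mem_erase.2 ⟨hxz, hx⟩))
  have hp2 : 2 ≤ p := by
    have hc := hcons B0 hB0P (zf h0) hz pF hpFB0
    simp only [zf_val] at hc
    omega
  have hpn : 2 ≤ p ∧ p + 1 ≤ n := ⟨hp2, by have := pF.isLt; omega⟩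
  have huniq : ∀ B ∈ P, ∀ C ∈ P, ∀ x : Fin n, x ∈ B → x ∈ C → B = C := by
    intro B hB C hC x hxB hxC
    obtain ⟨D, _, hDu⟩ := hcov x
    exact (hDu B ⟨hB, hxB⟩).trans (hDu C ⟨hC, hxC⟩).symm
  have hnotB0 : ∀ B ∈ P, B ≠ B0 → ∀ x : Fin n, x ∈ B → (x : ℕ) ≠ 0 ∧ (x : ℕ) ≠ p := by
    intro B hB hBne x hx
    constructor
    · intro hx0
      exact hBne (huniq B hB B0 hB0P x hx ((Fin.ext hx0 : x = zf h0) ▸ hz))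
    · intro hxp
      exact hBne (huniq B hB B0 hB0P x hx ((Fin.ext hxp : x = pF) ▸ hpFB0))
  have htri : ∀ B ∈ P, B ≠ B0 →
      (∀ x : Fin n, x ∈ B → 1 ≤ (x : ℕ) ∧ (x : ℕ) < p) ∨
      (∀ x : Fin n, x ∈ B → p < (x : ℕ)) := by
    intro B hB hBne
    by_cases hex : ∃ x : Fin n, x ∈ B ∧ (x : ℕ) < p
    · left
      obtain ⟨x, hxB, hxp⟩ := hex
      intro y hyB
      obtain ⟨hy0, hyp⟩ := hnotB0 B hB hBne y hyB
      refine ⟨by omega, ?_⟩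
      by_contra hyge
      push_neg at hyge
      have hx0 := (hnotB0 B hB hBne x hxB).1
      exact hnc B0 hB0P B hB (Ne.symm hBne) (zf h0) hz pF hpFB0 x hxB y hyB
        ⟨by rw [Fin.lt_def]; simp; omega, by rw [Fin.lt_def]; omega,
         by rw [Fin.lt_def]; omega⟩
    · right
      intro y hyB
      push_neg at hex
      have h1 := hex y hyB
      have h2 := (hnotB0 B hB hBne y hyB).2
      omega
  have h1 : 1 + (p - 1) ≤ n := by omega
  have hpo : p + (n - p) ≤ n := by omega
  set Rin := P.filter (fun B => ∀ x : Fin n, x ∈ B → 1 ≤ (x : ℕ) ∧ (x : ℕ) < p) with hRin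
  set Rout := (P.filter (fun B => ∃ x : Fin n, x ∈ B ∧ p ≤ (x : ℕ))).image
      (fun B => B.erase (zf h0)) with hRout
  have hwinIn : ∀ B ∈ Rin, ∀ x : Fin n, x ∈ B → 1 ≤ (x : ℕ) ∧ (x : ℕ) < 1 + (p - 1) := by
    intro B hB x hx
    have := (Finset.mem_filter.1 hB).2 x hx
    omega
  have hGi : Good (p - 1) (Rin.image (pullB 1 h1)) := by
    refine pull_good 1 h1 _ hwinIn (fun B hB => hne B (Finset.mem_filter.1 hB).1) ?_ ?_ ?_
    · intro i
      have hival : (emap 1 h1 i : ℕ) = 1 + (i : ℕ) := rfl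
      have hilt := i.isLt
      obtain ⟨B, ⟨hBP, hBx⟩, hBu⟩ := hcov (emap 1 h1 i)
      have hBne : B ≠ B0 := by
        intro h
        subst h
        have := hmin _ hBx (by simp [Fin.ext_iff, emap])
        simp only [hival] at this
        omega
      have hBin : B ∈ Rin := by
        rcases htri B hBP hBne with hI | hO
        · exact Finset.mem_filter.2 ⟨hBP, hI⟩
        · have := hO _ hBx
          simp only [hival] at this
          omega
      exact ⟨B, ⟨hBin, hBx⟩, fun C ⟨hC, hCx⟩ => hBu C ⟨(Finset.mem_filter.1 hC).1, hCx⟩⟩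
    · intro B hB C hC hBC a ha c hc b hb d hd
      exact hnc B (Finset.mem_filter.1 hB).1 C (Finset.mem_filter.1 hC).1 hBC
        a ha c hc b hb d hd
    · intro B hB x hx y hy
      exact hcons B (Finset.mem_filter.1 hB).1 x hx y hy
  have hwinOut : ∀ B ∈ Rout, ∀ x : Fin n, x ∈ B → p ≤ (x : ℕ) ∧ (x : ℕ) < p + (n - p) := by
    intro B' hB' x hx
    obtain ⟨B, hBf, rfl⟩ := Finset.mem_image.1 hB'
    obtain ⟨hBP, x0, hx0, hx0p⟩ := Finset.mem_filter.1 hBf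
    obtain ⟨hxz, hxB⟩ := Finset.mem_erase.1 hx
    have hxlt := x.isLt
    by_cases hBB0 : B = B0
    · subst hBB0
      exact ⟨hmin x hxB hxz, by omega⟩
    · rcases htri B hBP hBB0 with hI | hO
      · have := hI x0 hx0
        omega
      · have := hO x hxB
        omega
  have hGo : Good (n - p) (Rout.image (pullB p hpo)) := by
    refine pull_good p hpo _ hwinOut ?_ ?_ ?_ ?_
    · intro B' hB'
      obtain ⟨B, hBf, rfl⟩ := Finset.mem_image.1 hB'
      obtain ⟨hBP, x0, hx0, hx0p⟩ := Finset.mem_filter.1 hBf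
      exact ⟨x0, Finset.mem_erase.2 ⟨by simp [Fin.ext_iff]; omega, hx0⟩⟩
    · intro i
      have hival : (emap p hpo i : ℕ) = p + (i : ℕ) := rfl
      obtain ⟨B, ⟨hBP, hBx⟩, hBu⟩ := hcov (emap p hpo i)
      have hBf : B ∈ P.filter (fun B => ∃ x : Fin n, x ∈ B ∧ p ≤ (x : ℕ)) :=
        Finset.mem_filter.2 ⟨hBP, emap p hpo i, hBx, by simp [hival]⟩
      refine ⟨B.erase (zf h0), ⟨Finset.mem_image_of_mem _ hBf,
        Finset.mem_erase.2 ⟨by simp [Fin.ext_iff, hival]; omega, hBx⟩⟩, ?_⟩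
      rintro C' ⟨hC', hxC'⟩
      obtain ⟨C, hCf, rfl⟩ := Finset.mem_image.1 hC'
      rw [hBu C ⟨(Finset.mem_filter.1 hCf).1, Finset.mem_of_mem_erase hxC'⟩]
    · intro B' hB' C' hC' hBC a ha c hc b hb d hd
      obtain ⟨B, hBf, rfl⟩ := Finset.mem_image.1 hB'
      obtain ⟨C, hCf, rfl⟩ := Finset.mem_image.1 hC'
      have hBCne : B ≠ C := by rintro rfl; exact hBC rfl
      exact hnc B (Finset.mem_filter.1 hBf).1 C (Finset.mem_filter.1 hCf).1 hBCne
        a (Finset.mem_of_mem_erase ha) c (Finset.mem_of_mem_erase hc)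
        b (Finset.mem_of_mem_erase hb) d (Finset.mem_of_mem_erase hd)
    · intro B' hB' x hx y hy
      obtain ⟨B, hBf, rfl⟩ := Finset.mem_image.1 hB'
      exact hcons B (Finset.mem_filter.1 hBf).1 x (Finset.mem_of_mem_erase hx)
        y (Finset.mem_of_mem_erase hy)
  refine ⟨p, hpn, Rin.image (pullB 1 h1), Rout.image (pullB p hpo), hGi, hGo, ?_⟩
  rw [PB, Finset.image_image, Finset.image_image]
  have hIin : Rin.image (embB 1 h1 ∘ pullB 1 h1) = Rin := by
    rw [Finset.image_congr (f := embB 1 h1 ∘ pullB 1 h1) (g := id)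
      (fun B hB => embB_pullB B (hwinIn B hB)), Finset.image_id]
  have hIout : Rout.image (push hpn ∘ pullB p hpo) =
      P.filter (fun B => ∃ x : Fin n, x ∈ B ∧ p ≤ (x : ℕ)) := by
    rw [hRout, Finset.image_image]
    have heq : ∀ B ∈ P.filter (fun B => ∃ x : Fin n, x ∈ B ∧ p ≤ (x : ℕ)),
        ((push hpn ∘ pullB p hpo) ∘ fun B => B.erase (zf h0)) B = id B := by
      intro B hB
      obtain ⟨hBP, x0, hx0, hx0p⟩ := Finset.mem_filter.1 hB
      simp only [Function.comp_apply, id_eq]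
      by_cases hBB0 : B = B0
      · have hzB : zf h0 ∈ B := by rw [hBB0]; exact hz
        have hminB : ∀ x ∈ B, x ≠ zf h0 → p ≤ (x : ℕ) := by
          intro x hx hxz
          exact hmin x (by rw [← hBB0]; exact hx) hxz
        have hpFmemB : pF ∈ B.erase (zf h0) := by rw [hBB0]; exact hpFmem
        have h0in : (⟨0, by omega⟩ : Fin (n - p)) ∈ pullB p hpo (B.erase (zf h0)) := by
          rw [mem_pullB]
          have hEq : emap p hpo ⟨0, by omega⟩ = pF := Fin.ext (by simp [emap]; exact hpdef)
          rw [hEq]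
          exact hpFmemB
        rw [push, if_pos h0in, embB_pullB _ (fun x hx => by
          obtain ⟨hxz, hxB⟩ := Finset.mem_erase.1 hx
          exact ⟨hminB x hxB hxz, by have := x.isLt; omega⟩)]
        exact Finset.insert_erase hzB
      · rcases htri B hBP hBB0 with hI | hO
        · have := hI x0 hx0
          omega
        · have hzB : zf h0 ∉ B := by
            intro h
            have := hO _ h
            simp at this
          rw [Finset.erase_eq_of_notMem hzB]
          have h0nin : (⟨0, by omega⟩ : Fin (n - p)) ∉ pullB p hpo B := by
            rw [mem_pullB]
            intro h
            have := hO _ h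
            simp [emap] at this
          rw [push, if_neg h0nin, embB_pullB _ (fun x hx => by
            have := hO x hx
            have := x.isLt
            omega)]
    rw [Finset.image_congr heq, Finset.image_id]
  rw [hIin, hIout]
  apply Finset.Subset.antisymm
  · exact Finset.union_subset (Finset.filter_subset _ _) (Finset.filter_subset _ _)
  · intro B hB
    rw [Finset.mem_union]
    by_cases hBB0 : B = B0
    · subst hBB0
      exact Or.inr (Finset.mem_filter.2 ⟨hB, pF, hpFB0, le_rfl⟩)
    · rcases htri B hB hBB0 with hI | hO
      · exact Or.inl (Finset.mem_filter.2 ⟨hB, hI⟩)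
      · obtain ⟨x, hx⟩ := hne B hB
        exact Or.inr (Finset.mem_filter.2 ⟨hB, x, hx, by have := hO x hx; omega⟩)

end Decomp
section Assemble

def Sp (n : ℕ) : Type := {P : Finset (Finset (Fin n)) // Good n P}

instance (n : ℕ) : Finite (Sp n) := by unfold Sp; infer_instance

def Dom (n : ℕ) : Type :=
  Sp (n - 1) ⊕ (Σ _p : (Finset.Icc 2 (n - 1) : Finset ℕ), Sp ((_p : ℕ) - 1) × Sp (n - (_p : ℕ)))

instance (n : ℕ) : Finite (Dom n) := by unfold Dom; infer_instance

def F {n : ℕ} (hn : 3 ≤ n) : Dom n → Sp n := fun x =>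
  match x with
  | Sum.inl ⟨Q, hQ⟩ => ⟨PA (by omega) Q, PA_good (by omega) hQ⟩
  | Sum.inr ⟨pS, ⟨Qi, hQi⟩, ⟨Qo, hQo⟩⟩ =>
      ⟨PB (by have := Finset.mem_Icc.1 pS.2; omega) Qi Qo, PB_good hQi hQo⟩

set_option maxHeartbeats 1200000 in
theorem F_bij {n : ℕ} (hn : 3 ≤ n) : Function.Bijective (F hn) := by
  constructor
  · rintro (⟨Q, hQ⟩ | ⟨pS, ⟨Qi, hQi⟩, ⟨Qo, hQo⟩⟩)
      (⟨Q', hQ'⟩ | ⟨qS, ⟨Qi', hQi'⟩, ⟨Qo', hQo'⟩⟩) h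
    · -- inl / inl
      have h' : PA (by omega : 1 ≤ n) Q = PA (by omega : 1 ≤ n) Q' :=
        congrArg Subtype.val h
      refine congrArg _ (Subtype.ext ?_)
      show Q = Q'
      have e1 := PA_recover (hn := (by omega : 1 ≤ n)) (Q := Q) hQ.1.1
      have e2 := PA_recover (hn := (by omega : 1 ≤ n)) (Q := Q') hQ'.1.1
      rw [← e1, ← e2, h']
    · -- inl / inr
      exfalso
      have h' : PA (by omega : 1 ≤ n) Q =
          PB (by have := Finset.mem_Icc.1 qS.2; omega :
            2 ≤ (qS : ℕ) ∧ (qS : ℕ) + 1 ≤ n) Qi' Qo' :=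
        congrArg Subtype.val h
      have hmem : ({zf (by omega : (0:ℕ) < n)} : Finset (Fin n)) ∈ PA (by omega : 1 ≤ n) Q :=
        mem_PA.2 (Or.inl rfl)
      rw [h'] at hmem
      exact zf_singleton_not_mem_PB hmem
    · -- inr / inl
      exfalso
      have h' : PB (by have := Finset.mem_Icc.1 pS.2; omega :
            2 ≤ (pS : ℕ) ∧ (pS : ℕ) + 1 ≤ n) Qi Qo = PA (by omega : 1 ≤ n) Q' :=
        congrArg Subtype.val h
      have hmem : ({zf (by omega : (0:ℕ) < n)} : Finset (Fin n)) ∈ PA (by omega : 1 ≤ n) Q' :=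
        mem_PA.2 (Or.inl rfl)
      rw [← h'] at hmem
      exact zf_singleton_not_mem_PB hmem
    · -- inr / inr
      have h' : PB (by have := Finset.mem_Icc.1 pS.2; omega :
            2 ≤ (pS : ℕ) ∧ (pS : ℕ) + 1 ≤ n) Qi Qo =
          PB (by have := Finset.mem_Icc.1 qS.2; omega :
            2 ≤ (qS : ℕ) ∧ (qS : ℕ) + 1 ≤ n) Qi' Qo' :=
        congrArg Subtype.val h
      obtain ⟨B, ⟨hB, hzB⟩, _⟩ := (PB_good hQi hQo).1.2 (zf (by omega))
      have hneB := PB_erase_zf_nonempty hB hzB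
      have h1 := PB_min_char hB hzB hneB
      have hB2 : B ∈ PB (by have := Finset.mem_Icc.1 qS.2; omega :
          2 ≤ (qS : ℕ) ∧ (qS : ℕ) + 1 ≤ n) Qi' Qo' := by
        rw [← h']; exact hB
      have h2 := PB_min_char hB2 hzB hneB
      have hpq : pS = qS := Subtype.ext (by rw [← h1, h2])
      subst hpq
      have hQieq : Qi = Qi' := by
        have e1 := PB_recover_inner (Qi := Qi) (Qo := Qo)
          (hpn := by have := Finset.mem_Icc.1 pS.2; omega) hQo.1.1
        have e2 := PB_recover_inner (Qi := Qi') (Qo := Qo')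
          (hpn := by have := Finset.mem_Icc.1 pS.2; omega) hQo'.1.1
        rw [← e1, ← e2, h']
      have hQoeq : Qo = Qo' := by
        have e1 := PB_recover_outer (Qi := Qi) (Qo := Qo)
          (hpn := by have := Finset.mem_Icc.1 pS.2; omega) hQo.1.1
        have e2 := PB_recover_outer (Qi := Qi') (Qo := Qo')
          (hpn := by have := Finset.mem_Icc.1 pS.2; omega) hQo'.1.1
        rw [← e1, ← e2, h']
      subst hQieq
      subst hQoeq
      rfl
  · rintro ⟨P, hP⟩
    obtain ⟨B0, ⟨hB0P, hzB0⟩, _⟩ := hP.1.2 (zf (by omega))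
    by_cases hs : B0 = {zf (by omega : (0:ℕ) < n)}
    · have h0mem : ({zf (by omega : (0:ℕ) < n)} : Finset (Fin n)) ∈ P := by
        rw [← hs]; exact hB0P
      obtain ⟨hGood, hrec⟩ := case_singleton hn hP h0mem
      exact ⟨Sum.inl ⟨_, hGood⟩, Subtype.ext hrec⟩
    · obtain ⟨p, hpn, Qi, Qo, hGi, hGo, hrec⟩ := case_nonsingleton hn hP hB0P hzB0 hs
      have hpmem : p ∈ Finset.Icc 2 (n - 1) := Finset.mem_Icc.2 ⟨hpn.1, by omega⟩
      exact ⟨Sum.inr ⟨⟨p, hpmem⟩, ⟨Qi, hGi⟩, ⟨Qo, hGo⟩⟩, Subtype.ext hrec⟩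

lemma mycard_sigma {ι : Type*} [Fintype ι] (f : ι → Type*) [∀ i, Finite (f i)] :
    Nat.card (Σ i, f i) = ∑ i, Nat.card (f i) := by
  classical
  letI : ∀ i, Fintype (f i) := fun i => Fintype.ofFinite _
  simp [Nat.card_eq_fintype_card, Fintype.card_sigma]

theorem M_rec {n : ℕ} (hn : 3 ≤ n) :
    M n = M (n - 1) + ∑ p ∈ Finset.Icc 2 (n - 1), M (p - 1) * M (n - p) := by
  show Nat.card (Sp n) = Nat.card (Sp (n - 1)) +
    ∑ p ∈ Finset.Icc 2 (n - 1), Nat.card (Sp (p - 1)) * Nat.card (Sp (n - p))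
  rw [← Nat.card_eq_of_bijective _ (F_bij hn)]
  have h1 : Nat.card (Dom n) = Nat.card (Sp (n - 1)) +
      Nat.card (Σ _p : (Finset.Icc 2 (n - 1) : Finset ℕ),
        Sp ((_p : ℕ) - 1) × Sp (n - (_p : ℕ))) :=
    Nat.card_sum
  rw [h1, mycard_sigma]
  simp only [Nat.card_prod]
  rw [Finset.sum_coe_sort (Finset.Icc 2 (n - 1))
    (fun q => Nat.card (Sp (q - 1)) * Nat.card (Sp (n - q)))]

end Assemble
end S11

set_option synthInstance.maxSize 400 in
instance goodDec (n : ℕ) :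
    DecidablePred (fun P : Finset (Finset (Fin n)) =>
      IsPartition n P ∧ NCPart n P ∧ NoConsec n P) := by
  simp only [IsPartition, NCPart, NoConsec, ExistsUnique]; infer_instance

theorem statement11 :
    M 1 = 1 ∧ M 2 = 1 ∧
    ∀ n, 3 ≤ n → M n = M (n - 1) + ∑ j ∈ Finset.Icc 3 n, M (j - 2) * M (n - j + 1) := by
  refine ⟨?_, ?_, ?_⟩
  · rw [M, Nat.card_eq_fintype_card]; decide
  · rw [M, Nat.card_eq_fintype_card]; decide
  · intro n hn
    rw [S11.M_rec hn]
    congr 1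
    refine Finset.sum_nbij' (fun p => p + 1) (fun j => j - 1) ?_ ?_ ?_ ?_ ?_
    · intro a ha; simp only [Finset.mem_Icc] at *; omega
    · intro a ha; simp only [Finset.mem_Icc] at *; omega
    · intro a _; show a + 1 - 1 = a; omega
    · intro a ha; simp only [Finset.mem_Icc] at ha; show a - 1 + 1 = a; omega
    · intro a ha
      simp only [Finset.mem_Icc] at ha
      have h1 : a + 1 - 2 = a - 1 := by omega
      have h2 : n - (a + 1) + 1 = n - a := by omega
      rw [h1, h2]
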